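/- arXiv:1409.4461 — 2 statements merged into one kernel-verified Lean document; each statement's English description precedes it below -/
import Mathlib

section
/- Let V ⊆ ℝⁿ be a linear subspace, σ ∈ {+1, -1}ⁿ a sign vector, and c ∈ ℝⁿ. Consider the polyhedral cone K_σ = { x ∈ V : σ_i x_i ≥ 0 for all i }. Then the linear functional x ↦ ⟨c, x⟩ is bounded above on K_σ if and only if there exists y ∈ c + V^⊥ with σ_i y_i ≤ 0 for all i. Moreover, boundedness above on the cone K_σ is equivalent to ⟨c, x⟩ ≤ 0 for all x ∈ K_σ. -/
open scoped RealInnerProductSpace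


namespace Stmt8aux

variable {E : Type*} [NormedAddCommGroup E] [InnerProductSpace ℝ E]

/-- The cone generated by the vectors `v i`, `i ∈ t`. -/
def coneIn {ι : Type*} [Fintype ι] (v : ι → E) (t : Finset ι) : Set E :=
  {x | ∃ c : ι → ℝ, (∀ i, 0 ≤ c i) ∧ ∑ i ∈ t, c i • v i = x}

lemma coneIn_mono {ι : Type*} [Fintype ι] (v : ι → E) {s t : Finset ι} (hst : s ⊆ t) :
    coneIn v s ⊆ coneIn v t := by
  classical
  rintro x ⟨c, hc, rfl⟩
  refine ⟨fun i => if i ∈ s then c i else 0, fun i => by dsimp only; split <;> simp [hc _], ?_⟩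
  have : ∀ i ∈ t, (if i ∈ s then c i else 0) • v i = if i ∈ s then c i • v i else 0 := by
    intro i _; split <;> simp
  rw [Finset.sum_congr rfl this, Finset.sum_ite_mem, Finset.inter_eq_right.mpr hst]

/-- Conic Carathéodory. -/
lemma carath {ι : Type*} [Fintype ι] (v : ι → E) (t : Finset ι) (x : E)
    (hx : x ∈ coneIn v t) :
    ∃ s : Finset ι, s ⊆ t ∧ LinearIndependent ℝ (fun i : s => v i) ∧ x ∈ coneIn v s := by
  classical
  induction t using Finset.strongInductionOn with
  | _ t IH =>
  by_cases hli : LinearIndependent ℝ (fun i : t => v i)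
  · exact ⟨t, le_refl _, hli, hx⟩
  · obtain ⟨c, hc, hcx⟩ := hx
    rw [Fintype.not_linearIndependent_iff] at hli
    obtain ⟨g, hg0, i₁, hgi₁⟩ := hli
    set d : ι → ℝ := fun j => if h : j ∈ t then g ⟨j, h⟩ else 0 with hd
    have hdsum : ∑ j ∈ t, d j • v j = 0 := by
      rw [← hg0, ← Finset.sum_coe_sort t (fun j => d j • v j)]
      exact Finset.sum_congr rfl fun i _ => by simp [hd, i.2]
    have key : ∀ e : ι → ℝ, (∑ j ∈ t, e j • v j = 0) → (∃ j ∈ t, 0 < e j) →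
        ∃ i₀ ∈ t, x ∈ coneIn v (t.erase i₀) := by
      intro e hesum ⟨j₁, hj₁t, hj₁⟩
      set P : Finset ι := t.filter (fun i => 0 < e i) with hP
      obtain ⟨i₀, hi₀P, hi₀min⟩ :=
        P.exists_min_image (fun i => c i / e i) ⟨j₁, by simp [hP, hj₁t, hj₁]⟩
      have hi₀t : i₀ ∈ t := (Finset.mem_filter.mp hi₀P).1
      have hei₀ : 0 < e i₀ := (Finset.mem_filter.mp hi₀P).2
      set r : ℝ := c i₀ / e i₀ with hr
      have hr0 : 0 ≤ r := div_nonneg (hc i₀) hei₀.le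
      set c' : ι → ℝ := fun j => if j ∈ t then c j - r * e j else 0 with hc'
      have hc'0 : ∀ j, 0 ≤ c' j := by
        intro j
        simp only [hc']
        split
        · rename_i hjt
          rcases le_or_gt (e j) 0 with hej | hej
          · nlinarith [hc j]
          · have := hi₀min j (Finset.mem_filter.mpr ⟨hjt, hej⟩)
            rw [hr, div_le_div_iff₀ hei₀ hej] at this
            have hre : r * e i₀ = c i₀ := div_mul_cancel₀ _ hei₀.ne'
            nlinarith [hei₀, hre]
        · exact le_refl 0
      have hc'i₀ : c' i₀ = 0 := by
        simp only [hc', if_pos hi₀t, hr]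
        field_simp
        ring
      have hsum : ∑ j ∈ t.erase i₀, c' j • v j = x := by
        have h1 : ∑ j ∈ t, c' j • v j = x := by
          have : ∀ j ∈ t, c' j • v j = c j • v j - r • (e j • v j) := by
            intro j hj
            simp only [hc', if_pos hj, sub_smul, smul_smul]
          rw [Finset.sum_congr rfl this, Finset.sum_sub_distrib, ← Finset.smul_sum, hesum,
            smul_zero, sub_zero, hcx]
        rw [← h1, Finset.sum_erase _ (by rw [hc'i₀, zero_smul])]
      exact ⟨i₀, hi₀t, c', hc'0, hsum⟩
    have hdi₁ : d (i₁ : ι) = g i₁ := by simp [hd, i₁.2]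
    rcases lt_or_gt_of_ne hgi₁ with hneg | hpos
    · obtain ⟨i₀, hi₀t, hx'⟩ := key (-d) (by simp only [Pi.neg_apply, neg_smul, Finset.sum_neg_distrib, hdsum, neg_zero]) 
        ⟨i₁, i₁.2, by simp [hdi₁]; linarith⟩
      obtain ⟨s, hs1, hs2, hs3⟩ := IH (t.erase i₀) (Finset.erase_ssubset hi₀t) hx'
      exact ⟨s, hs1.trans (Finset.erase_subset _ _), hs2, hs3⟩
    · obtain ⟨i₀, hi₀t, hx'⟩ := key d hdsum ⟨i₁, i₁.2, by rw [hdi₁]; exact hpos⟩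
      obtain ⟨s, hs1, hs2, hs3⟩ := IH (t.erase i₀) (Finset.erase_ssubset hi₀t) hx'
      exact ⟨s, hs1.trans (Finset.erase_subset _ _), hs2, hs3⟩


/-- The linear map sending coefficients to the combination. -/
def combMap {ι : Type*} [Fintype ι] (v : ι → E) : (ι → ℝ) →ₗ[ℝ] E where
  toFun c := ∑ i, c i • v i
  map_add' c d := by simp [add_smul, Finset.sum_add_distrib]
  map_smul' r c := by simp [smul_smul, Finset.smul_sum]

lemma isClosed_coneIn_of_li [FiniteDimensional ℝ E] {ι : Type*} [Fintype ι] (v : ι → E)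
    (s : Finset ι) (h : LinearIndependent ℝ (fun i : s => v i)) : IsClosed (coneIn v s) := by
  classical
  have himg : coneIn v s = combMap (fun i : s => v i) '' {c : s → ℝ | ∀ i, 0 ≤ c i} := by
    ext x
    constructor
    · rintro ⟨c, hc, rfl⟩
      refine ⟨fun i => c i, fun i => hc i, ?_⟩
      simp only [combMap, LinearMap.coe_mk, AddHom.coe_mk]
      exact Finset.sum_coe_sort s (fun j => c j • v j)
    · rintro ⟨c, hc, rfl⟩
      refine ⟨fun j => if hj : j ∈ s then c ⟨j, hj⟩ else 0, fun j => ?_, ?_⟩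
      · dsimp only; split
        · exact hc _
        · exact le_refl 0
      · simp only [combMap, LinearMap.coe_mk, AddHom.coe_mk]
        rw [← Finset.sum_coe_sort s (fun j => (if hj : j ∈ s then c ⟨j, hj⟩ else 0) • v j)]
        exact (Finset.sum_congr rfl fun i _ => by simp [i.2]).symm
  rw [himg]
  have hinj : Function.Injective (combMap (fun i : s => v i)) := by
    rw [← LinearMap.ker_eq_bot, LinearMap.ker_eq_bot']
    intro c hc
    exact funext (Fintype.linearIndependent_iff.mp h c hc)
  have hemb := LinearMap.isClosedEmbedding_of_injective (f := combMap (fun i : s => v i))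
    (LinearMap.ker_eq_bot.mpr hinj)
  refine hemb.isClosedMap _ ?_
  have : {c : s → ℝ | ∀ i, 0 ≤ c i} = ⋂ i : s, {c : s → ℝ | 0 ≤ c i} := by
    ext c; simp [Set.mem_iInter]
  rw [this]
  exact isClosed_iInter fun i => isClosed_le continuous_const (continuous_apply i)

/-- A finitely generated cone is closed. -/
lemma isClosed_coneOf [FiniteDimensional ℝ E] {ι : Type*} [Fintype ι] (v : ι → E) :
    IsClosed (coneIn v Finset.univ) := by
  have : coneIn v Finset.univ =
      ⋃ (s : Finset ι) (_ : LinearIndependent ℝ (fun i : s => v i)), coneIn v s := by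
    ext x
    simp only [Set.mem_iUnion]
    constructor
    · intro hx
      obtain ⟨s, _, hli, hxs⟩ := carath v Finset.univ x hx
      exact ⟨s, hli, hxs⟩
    · rintro ⟨s, _, hxs⟩
      exact coneIn_mono v (Finset.subset_univ s) hxs
  rw [this]
  exact isClosed_iUnion_of_finite fun s => isClosed_iUnion_of_finite
    fun hs => isClosed_coneIn_of_li v s hs

lemma mem_coneIn_self {ι : Type*} [Fintype ι] (v : ι → E) (i : ι) :
    v i ∈ coneIn v Finset.univ := by
  classical
  refine ⟨fun j => if j = i then 1 else 0, fun j => by dsimp only; split <;> norm_num, ?_⟩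
  simp [ite_smul]

lemma zero_mem_coneIn {ι : Type*} [Fintype ι] (v : ι → E) (t : Finset ι) :
    (0 : E) ∈ coneIn v t :=
  ⟨fun _ => 0, fun _ => le_refl 0, by simp⟩

/-- The finitely generated cone as a `ConvexCone`. -/
def coneOfCC {ι : Type*} [Fintype ι] (v : ι → E) : ConvexCone ℝ E where
  carrier := coneIn v Finset.univ
  smul_mem' := by
    rintro r hr x ⟨c, hc, rfl⟩
    exact ⟨fun i => r * c i, fun i => mul_nonneg hr.le (hc i),
      by simp [Finset.smul_sum, mul_smul]⟩
  add_mem' := by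
    rintro x ⟨c, hc, rfl⟩ y ⟨d, hd, rfl⟩
    exact ⟨fun i => c i + d i, fun i => add_nonneg (hc i) (hd i),
      by simp [add_smul, Finset.sum_add_distrib]⟩

end Stmt8aux

/-- (Linear programming / Farkas duality for sign-vector cones.)
Let `V ⊆ ℝⁿ` be a linear subspace, `σ ∈ {±1}ⁿ` a sign vector, `c ∈ ℝⁿ`, and
`K_σ = { x ∈ V | σᵢ xᵢ ≥ 0 ∀ i }`.  Then `x ↦ ⟨c, x⟩` is bounded above on `K_σ` iff there
is `y ∈ c + V^⊥` with `σᵢ yᵢ ≤ 0` for all `i`; moreover boundedness above on the cone is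
equivalent to `⟨c, x⟩ ≤ 0` for all `x ∈ K_σ`. -/
theorem statement8 (n : ℕ) (V : Submodule ℝ (EuclideanSpace ℝ (Fin n)))
    (σ : Fin n → ℝ) (hσ : ∀ i, σ i = 1 ∨ σ i = -1)
    (c : EuclideanSpace ℝ (Fin n)) :
    (BddAbove ((fun x => ⟪c, x⟫) ''
        {x : EuclideanSpace ℝ (Fin n) | x ∈ V ∧ ∀ i, 0 ≤ σ i * x i}) ↔
      ∃ y : EuclideanSpace ℝ (Fin n), y - c ∈ Vᗮ ∧ ∀ i, σ i * y i ≤ 0) ∧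
    (BddAbove ((fun x => ⟪c, x⟫) ''
        {x : EuclideanSpace ℝ (Fin n) | x ∈ V ∧ ∀ i, 0 ≤ σ i * x i}) ↔
      ∀ x : EuclideanSpace ℝ (Fin n), x ∈ V → (∀ i, 0 ≤ σ i * x i) → ⟪c, x⟫ ≤ 0) := by
  classical
  have hσ2 : ∀ i, σ i * σ i = 1 := fun i => by rcases hσ i with h | h <;> rw [h] <;> norm_num
  -- bounded above ⟹ nonpositive on the cone
  have h1 : BddAbove ((fun x => ⟪c, x⟫) ''
        {x : EuclideanSpace ℝ (Fin n) | x ∈ V ∧ ∀ i, 0 ≤ σ i * x i}) →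
      ∀ x : EuclideanSpace ℝ (Fin n), x ∈ V → (∀ i, 0 ≤ σ i * x i) → ⟪c, x⟫ ≤ 0 := by
    rintro ⟨M, hM⟩ x hxV hxσ
    by_contra hpos
    push_neg at hpos
    set t : ℝ := max ((M + 1) / ⟪c, x⟫) 0 with ht
    have ht0 : 0 ≤ t := le_max_right _ _
    have hmem : ⟪c, t • x⟫ ∈ ((fun x => ⟪c, x⟫) ''
        {x : EuclideanSpace ℝ (Fin n) | x ∈ V ∧ ∀ i, 0 ≤ σ i * x i}) := by
      refine ⟨t • x, ⟨V.smul_mem t hxV, fun i => ?_⟩, rfl⟩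
      have : (t • x) i = t * x i := rfl
      rw [this, show σ i * (t * x i) = t * (σ i * x i) by ring]
      exact mul_nonneg ht0 (hxσ i)
    have hle := hM hmem
    rw [real_inner_smul_right] at hle
    have h2 : (M + 1) / ⟪c, x⟫ ≤ t := le_max_left _ _
    rw [div_le_iff₀ hpos] at h2
    linarith
  -- nonpositive ⟹ bounded above
  have h4 : (∀ x : EuclideanSpace ℝ (Fin n), x ∈ V → (∀ i, 0 ≤ σ i * x i) → ⟪c, x⟫ ≤ 0) →
      BddAbove ((fun x => ⟪c, x⟫) ''
        {x : EuclideanSpace ℝ (Fin n) | x ∈ V ∧ ∀ i, 0 ≤ σ i * x i}) := by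
    intro h
    refine ⟨0, ?_⟩
    rintro _ ⟨x, ⟨hx1, hx2⟩, rfl⟩
    exact h x hx1 hx2
  -- existence of `y` ⟹ nonpositive on the cone
  have h3 : (∃ y : EuclideanSpace ℝ (Fin n), y - c ∈ Vᗮ ∧ ∀ i, σ i * y i ≤ 0) →
      ∀ x : EuclideanSpace ℝ (Fin n), x ∈ V → (∀ i, 0 ≤ σ i * x i) → ⟪c, x⟫ ≤ 0 := by
    rintro ⟨y, hyV, hyσ⟩ x hxV hxσ
    have horth : ⟪x, y - c⟫ = 0 := Submodule.inner_right_of_mem_orthogonal hxV hyV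
    have hcy : ⟪c, x⟫ = ⟪y, x⟫ := by
      have := inner_sub_left (𝕜 := ℝ) y c x
      have horth' : ⟪y - c, x⟫ = 0 := (real_inner_comm _ _).trans horth
      linarith [this, horth']
    rw [hcy, PiLp.inner_apply]
    refine Finset.sum_nonpos fun i _ => ?_
    have hy := hyσ i
    have hx := hxσ i
    simp only [RCLike.inner_apply, conj_trivial]
    rcases hσ i with h | h <;> rw [h] at hy hx
    · rw [one_mul] at hy hx
      exact mul_nonpos_of_nonneg_of_nonpos hx hy
    · rw [neg_one_mul, neg_nonpos] at hy
      rw [neg_one_mul, le_neg, neg_zero] at hx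
      exact mul_nonpos_of_nonpos_of_nonneg hx hy
  -- the Farkas direction: nonpositive on the cone ⟹ existence of `y`
  have h2 : (∀ x : EuclideanSpace ℝ (Fin n), x ∈ V → (∀ i, 0 ≤ σ i * x i) → ⟪c, x⟫ ≤ 0) →
      ∃ y : EuclideanSpace ℝ (Fin n), y - c ∈ Vᗮ ∧ ∀ i, σ i * y i ≤ 0 := by
    intro hle
    obtain ⟨Sf, hSf⟩ := IsNoetherian.noetherian Vᗮ
    set g : (Fin n ⊕ ({x // x ∈ Sf} ⊕ {x // x ∈ Sf})) → EuclideanSpace ℝ (Fin n) :=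
      Sum.elim (fun i => EuclideanSpace.single i (-σ i))
        (Sum.elim (fun s => (s : EuclideanSpace ℝ (Fin n)))
          (fun s => -(s : EuclideanSpace ℝ (Fin n)))) with hg
    -- `c` lies in the finitely generated cone via the bipolar theorem
    have hD : c ∈ Stmt8aux.coneIn g Finset.univ := by
      let K : ProperCone ℝ (EuclideanSpace ℝ (Fin n)) :=
        { carrier := Stmt8aux.coneIn g Finset.univ
          add_mem' := fun hx hy => (Stmt8aux.coneOfCC g).add_mem' hx hy
          zero_mem' := Stmt8aux.zero_mem_coneIn g _
          smul_mem' := by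
            rintro r x ⟨a, ha, rfl⟩
            exact ⟨fun i => (r : ℝ) * a i, fun i => mul_nonneg r.2 (ha i),
              by simp [Finset.smul_sum, mul_smul, NNReal.smul_def]⟩
          isClosed' := Stmt8aux.isClosed_coneOf g }
      have hcc : c ∈ K := by
        by_contra hnot
        obtain ⟨x, hx, hxc⟩ := ProperCone.hyperplane_separation' K hnot
        have hgen : ∀ j, (0:ℝ) ≤ ⟪g j, x⟫ := fun j => hx (g j) (Stmt8aux.mem_coneIn_self g j)
        -- the sign inequalities
        have hx1 : ∀ i, σ i * x i ≤ 0 := by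
          intro i
          have h := hgen (Sum.inl i)
          rw [hg] at h
          simp only [Sum.elim_inl, EuclideanSpace.inner_single_left, conj_trivial] at h
          linarith
        -- x is in V
        have hxV : x ∈ V := by
          rw [← Submodule.orthogonal_orthogonal V, Submodule.mem_orthogonal]
          intro u hu
          rw [← hSf] at hu
          induction hu using Submodule.span_induction with
          | mem u hu' =>
            have ha := hgen (Sum.inr (Sum.inl ⟨u, hu'⟩))
            have hb := hgen (Sum.inr (Sum.inr ⟨u, hu'⟩))
            rw [hg] at ha hb
            simp only [Sum.elim_inr, Sum.elim_inl, inner_neg_left] at ha hb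
            linarith
          | zero => exact inner_zero_left x
          | add u w _ _ hu' hw' => rw [inner_add_left, hu', hw', add_zero]
          | smul r u _ hu' => rw [real_inner_smul_left, hu', mul_zero]
        have hnx := hle (-x) (V.neg_mem hxV) (fun i => by
          have h := hx1 i
          have hxi : (-x : EuclideanSpace ℝ (Fin n)) i = -(x i) := rfl
          rw [hxi, mul_neg]; linarith)
        rw [inner_neg_right] at hnx
        linarith
      exact hcc
    obtain ⟨a, ha, hac⟩ := hD
    rw [hg] at hac
    rw [Fintype.sum_sum_type, Fintype.sum_sum_type] at hac
    simp only [Sum.elim_inl, Sum.elim_inr] at hac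
    refine ⟨∑ i : Fin n, a (Sum.inl i) • EuclideanSpace.single i (-σ i), ?_, ?_⟩
    · have hw : ((∑ s : {x // x ∈ Sf}, a (Sum.inr (Sum.inl s)) • (s : EuclideanSpace ℝ (Fin n))) +
          ∑ s : {x // x ∈ Sf}, a (Sum.inr (Sum.inr s)) • -(s : EuclideanSpace ℝ (Fin n))) ∈ Vᗮ := by
        rw [← hSf]
        exact Submodule.add_mem _
          (Submodule.sum_mem _ fun s _ => Submodule.smul_mem _ _ (Submodule.subset_span s.2))
          (Submodule.sum_mem _ fun s _ => Submodule.smul_mem _ _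
            (Submodule.neg_mem _ (Submodule.subset_span s.2)))
      have heq : (∑ i : Fin n, a (Sum.inl i) • EuclideanSpace.single i (-σ i)) - c =
          -(((∑ s : {x // x ∈ Sf}, a (Sum.inr (Sum.inl s)) • (s : EuclideanSpace ℝ (Fin n))) +
          ∑ s : {x // x ∈ Sf}, a (Sum.inr (Sum.inr s)) • -(s : EuclideanSpace ℝ (Fin n)))) := by
        rw [← hac]; abel
      rw [heq]
      exact Submodule.neg_mem _ hw
    · intro j
      have hyj : (∑ i : Fin n, a (Sum.inl i) • EuclideanSpace.single i (-σ i)) j =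
          a (Sum.inl j) * (-σ j) := by
        rw [WithLp.ofLp_sum, Finset.sum_apply]
        rw [Finset.sum_eq_single j]
        · simp
        · intro i _ hij
          simp [EuclideanSpace.single_apply, Ne.symm hij]
        · simp
      rw [hyj]
      have := hσ2 j
      nlinarith [ha (Sum.inl j)]
  exact ⟨⟨fun hb => h2 (h1 hb), fun hy => h4 (h3 hy)⟩, ⟨h1, h4⟩⟩
end

section
/- Let k be a field and let A be a differential graded algebra over k equipped with an additional 'weight' grading: A = ⊕_{n,w ∈ ℤ} A^{n,w}, where n is the cohomological degree, the differential d has bidegree (1, 0), and multiplication is additive in both degrees. Suppose the cohomology is pure: for every n, H^n(A) is concentrated in weight n (i.e. the cohomology of the complex (A^{•,w}, d) vanishes in cohomological degree n unless w = n). Then A is formal: there is a zig-zag of quasi-isomorphisms of dg-algebras connecting A to its cohomology H*(A) with zero differential. In fact the bigraded subspace C ⊆ A with C^n = (A^{n,n} ∩ ker d) ⊕ ⊕_{w > n} A^{n,w} is a sub-dg-algebra, and the inclusion C ↪ A and the projection C → H*(A) are both quasi-isomorphisms of dg-algebras. -/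
set_option linter.unusedSectionVars false

section Helpers

variable {k A : Type*} [Field k] [Ring A] [Algebra k A]
  (𝒜 : ℤ × ℤ → Submodule k A) [GradedAlgebra 𝒜] (d : A →ₗ[k] A)

/-- The `(m, w₀)`-component of a finite sum of elements `g w ∈ 𝒜 (m, w)`. -/
lemma st15_sumcomp (m : ℤ) (S : Finset ℤ) (g : ℤ → A) (hg : ∀ w, g w ∈ 𝒜 (m, w)) (w₀ : ℤ) :
    ((DirectSum.decompose 𝒜 (∑ w ∈ S, g w) (m, w₀) : 𝒜 (m, w₀)) : A)
      = if w₀ ∈ S then g w₀ else 0 := by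
  classical
  induction S using Finset.induction with
  | empty => simp
  | @insert a s ha ih =>
    rw [Finset.sum_insert ha, DirectSum.decompose_add, DirectSum.add_apply,
      Submodule.coe_add, ih]
    by_cases h : w₀ = a
    · subst h
      rw [DirectSum.decompose_of_mem_same 𝒜 (hg w₀)]
      simp [Finset.mem_insert, ha]
    · have hne : ((m, a) : ℤ × ℤ) ≠ (m, w₀) := by
        simp only [ne_eq, Prod.mk.injEq, not_and]
        exact fun _ hh => h hh.symm
      rw [DirectSum.decompose_of_mem_ne 𝒜 (hg a) hne]
      simp [Finset.mem_insert, h]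

/-- The `(n, w₀)`-component of a finsupp-sum of homogeneous elements. -/
lemma st15_finsuppcomp (n : ℤ) (f : ℤ →₀ A) (hf : ∀ w, f w ∈ 𝒜 (n, w)) (w₀ : ℤ) :
    ((DirectSum.decompose 𝒜 (f.sum fun _ x => x) (n, w₀) : 𝒜 (n, w₀)) : A) = f w₀ := by
  rw [Finsupp.sum, st15_sumcomp 𝒜 n f.support f hf w₀]
  split
  · rfl
  · exact (Finsupp.notMem_support_iff.mp ‹_›).symm

/-- Extract a finsupp representation from membership in a (conditioned) iSup. -/
lemma st15_extract (n : ℤ) (P : ℤ → Prop) {c : A}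
    (hc : c ∈ ⨆ w : ℤ, ⨆ _ : P w, 𝒜 (n, w)) :
    ∃ f : ℤ →₀ A, (∀ w, f w ∈ 𝒜 (n, w)) ∧ (∀ w, f w ≠ 0 → P w) ∧
      c = f.sum fun _ x => x := by
  obtain ⟨f, hf, hsum⟩ := (Submodule.mem_iSup_iff_exists_finsupp _ _).mp hc
  refine ⟨f, fun w => ?_, fun w hw => ?_, hsum.symm⟩
  · have h := hf w
    by_cases hP : P w
    · rwa [iSup_pos hP] at h
    · rw [iSup_neg hP] at h
      rw [(Submodule.mem_bot k).mp h]
      exact Submodule.zero_mem _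
  · by_contra hP
    have h := hf w
    rw [iSup_neg hP] at h
    exact hw ((Submodule.mem_bot k).mp h)

lemma st15_extractA (n : ℤ) {a : A} (ha : a ∈ ⨆ w : ℤ, 𝒜 (n, w)) :
    ∃ f : ℤ →₀ A, (∀ w, f w ∈ 𝒜 (n, w)) ∧ a = f.sum fun _ x => x := by
  obtain ⟨f, hf, hsum⟩ := (Submodule.mem_iSup_iff_exists_finsupp _ _).mp ha
  exact ⟨f, hf, hsum.symm⟩

/-- If a sum of homogeneous pieces is killed by `d`, each piece is killed by `d`. -/
lemma st15_uniq (hd : ∀ n w : ℤ, ∀ a ∈ 𝒜 (n, w), d a ∈ 𝒜 (n + 1, w))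
    (n : ℤ) (f : ℤ →₀ A) (hf : ∀ w, f w ∈ 𝒜 (n, w))
    (h0 : d (f.sum fun _ x => x) = 0) : ∀ w, d (f w) = 0 := by
  intro w₀
  by_cases hw : w₀ ∈ f.support
  · rw [Finsupp.sum] at h0
    rw [map_sum] at h0
    have h := st15_sumcomp 𝒜 n.succ f.support (fun w => d (f w))
      (fun w => by exact hd n w (f w) (hf w)) w₀
    rw [h0] at h
    simp only [DirectSum.decompose_zero, DirectSum.zero_apply, ZeroMemClass.coe_zero,
      if_pos hw] at h
    exact h.symm
  · rw [Finsupp.notMem_support_iff.mp hw, map_zero]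

end Helpers

/-- (Purity implies formality.)  Let `A` be a dg-algebra over a field
`k` with an extra weight grading `A = ⊕_{n,w} A^{n,w}` (cohomological degree `n`, weight
`w`), differential `d` of bidegree `(1,0)` satisfying the signed Leibniz rule, and suppose
the cohomology is pure: the complex `(A^{•,w}, d)` is exact in cohomological degree `n`
unless `w = n`.  Then the bigraded subspace `C` with
`Cⁿ = (A^{n,n} ∩ ker d) ⊕ ⊕_{w > n} A^{n,w}` is a sub-dg-algebra of `A`, the inclusion
`C ↪ A` is a quasi-isomorphism, and the projection `C → H*(A)` (taking the weight-`n`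
component in degree `n`) is a quasi-isomorphism; hence `A` is formal. -/
theorem statement15 {k A : Type*} [Field k] [Ring A] [Algebra k A]
    (𝒜 : ℤ × ℤ → Submodule k A) [GradedAlgebra 𝒜]
    (d : A →ₗ[k] A)
    (hd : ∀ n w : ℤ, ∀ a ∈ 𝒜 (n, w), d a ∈ 𝒜 (n + 1, w))
    (hdd : ∀ a : A, d (d a) = 0)
    (hleib : ∀ n w : ℤ, ∀ a ∈ 𝒜 (n, w), ∀ b : A,
      d (a * b) = d a * b + (if Even n then a * d b else -(a * d b)))
    (hpure : ∀ n w : ℤ, w ≠ n → ∀ a ∈ 𝒜 (n, w), d a = 0 →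
      ∃ b ∈ 𝒜 (n - 1, w), d b = a)
    -- `C` in cohomological degree `n`, and the full degree-`n` part of `A`:
    (Csub An : ℤ → Submodule k A)
    (hCsub : ∀ n : ℤ,
      Csub n = (𝒜 (n, n) ⊓ LinearMap.ker d) ⊔ ⨆ w : ℤ, ⨆ _ : n < w, 𝒜 (n, w))
    (hAn : ∀ n : ℤ, An n = ⨆ w : ℤ, 𝒜 (n, w)) :
    -- (a) `C` is a subalgebra ...
    ((1 : A) ∈ Csub 0 ∧
      ∀ m n : ℤ, ∀ a ∈ Csub m, ∀ b ∈ Csub n, a * b ∈ Csub (m + n)) ∧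
    -- ... closed under the differential, i.e. a sub-dg-algebra:
    (∀ n : ℤ, ∀ a ∈ Csub n, d a ∈ Csub (n + 1)) ∧
    -- (b) the inclusion `C ↪ A` is a quasi-isomorphism: surjective on cohomology ...
    (∀ n : ℤ, ∀ a ∈ An n, d a = 0 → ∃ c ∈ Csub n, ∃ b ∈ An (n - 1), a = c + d b) ∧
    -- ... and injective on cohomology:
    (∀ n : ℤ, ∀ c ∈ Csub n, d c = 0 → (∃ b ∈ An (n - 1), c = d b) →
      ∃ b' ∈ Csub (n - 1), c = d b') ∧
    -- (c) the projection `C → H*(A)`, `c ↦ [weight-n component of c]`, is a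
    -- quasi-isomorphism: surjective on cohomology ...
    (∀ n : ℤ, ∀ z ∈ 𝒜 (n, n), d z = 0 → ∃ c ∈ Csub n, d c = 0 ∧
      ∃ b ∈ An (n - 1), z - ((DirectSum.decompose 𝒜 c (n, n) : 𝒜 (n, n)) : A) = d b) ∧
    -- ... and injective on cohomology:
    (∀ n : ℤ, ∀ c ∈ Csub n, d c = 0 →
      (∃ b ∈ An (n - 1), ((DirectSum.decompose 𝒜 c (n, n) : 𝒜 (n, n)) : A) = d b) →
      ∃ b' ∈ Csub (n - 1), c = d b') := by
  classical
  -- membership helpers for `Csub`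
  have memC_left : ∀ (n : ℤ) (x : A), x ∈ 𝒜 (n, n) → d x = 0 → x ∈ Csub n := by
    intro n x hx hdx
    rw [hCsub]
    exact Submodule.mem_sup_left (Submodule.mem_inf.mpr ⟨hx, LinearMap.mem_ker.mpr hdx⟩)
  have memC_right : ∀ (n w : ℤ) (x : A), n < w → x ∈ 𝒜 (n, w) → x ∈ Csub n := by
    intro n w x h hx
    rw [hCsub]
    exact Submodule.mem_sup_right
      (le_iSup (fun w => ⨆ _ : n < w, 𝒜 (n, w)) w
        ((le_iSup (fun _ : n < w => 𝒜 (n, w)) h) hx))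
  -- d kills 1
  have hd1 : d (1 : A) = 0 := by
    have h1 : (1 : A) ∈ 𝒜 (0, 0) := SetLike.one_mem_graded 𝒜
    have h := hleib 0 0 1 h1 1
    simp only [one_mul, mul_one, Even.zero, if_pos] at h
    have h' : d (1 : A) + 0 = d 1 + d 1 := by rw [add_zero]; exact h
    exact (add_left_cancel h').symm
  -- structure of elements of `Csub n`
  have extractC : ∀ (n : ℤ) (c : A), c ∈ Csub n →
      ∃ f : ℤ →₀ A, (∀ w, f w ∈ 𝒜 (n, w)) ∧ (∀ w, f w ≠ 0 → n ≤ w) ∧ d (f n) = 0 ∧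
        c = f.sum fun _ x => x := by
    intro n c hc
    rw [hCsub] at hc
    obtain ⟨x, hx, y, hy, rfl⟩ := Submodule.mem_sup.mp hc
    obtain ⟨hx1, hx2⟩ := Submodule.mem_inf.mp hx
    obtain ⟨g, hg1, hg2, rfl⟩ := st15_extract 𝒜 n (fun w => n < w) hy
    have hgn : g n = 0 := by
      by_contra h
      exact lt_irrefl n (hg2 n h)
    have happ : ∀ w, (Finsupp.single n x + g) w = if w = n then x else g w := by
      intro w
      rw [Finsupp.add_apply, Finsupp.single_apply]
      by_cases h : w = n
      · subst h; simp [hgn]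
      · rw [if_neg (Ne.symm h), if_neg h, zero_add]
    refine ⟨Finsupp.single n x + g, ?_, ?_, ?_, ?_⟩
    · intro w
      rw [happ w]
      split_ifs with h
      · subst h; exact hx1
      · exact hg1 w
    · intro w hw
      rw [happ w] at hw
      split_ifs at hw with h
      · omega
      · exact (hg2 w hw).le
    · rw [happ n, if_pos rfl]
      exact LinearMap.mem_ker.mp hx2
    · rw [Finsupp.sum_add_index' (fun _ => rfl) (fun _ _ _ => rfl),
        Finsupp.sum_single_index rfl]
  -- (a.1) 1 ∈ Csub 0
  have goal1 : (1 : A) ∈ Csub 0 := by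
    have h1 : (1 : A) ∈ 𝒜 (0, 0) := SetLike.one_mem_graded 𝒜
    exact memC_left 0 1 h1 hd1
  -- (a.2) multiplicativity
  have goal2 : ∀ m n : ℤ, ∀ a ∈ Csub m, ∀ b ∈ Csub n, a * b ∈ Csub (m + n) := by
    intro m n a ha b hb
    obtain ⟨f, hf, hgef, hdf, rfl⟩ := extractC m a ha
    obtain ⟨g, hg, hgeg, hdg, rfl⟩ := extractC n b hb
    rw [Finsupp.sum, Finsupp.sum, Finset.sum_mul_sum]
    apply Submodule.sum_mem
    intro w hw
    apply Submodule.sum_mem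
    intro w' hw'
    have h1 : m ≤ w := hgef w (Finsupp.mem_support_iff.mp hw)
    have h2 : n ≤ w' := hgeg w' (Finsupp.mem_support_iff.mp hw')
    have hmem : f w * g w' ∈ 𝒜 (m + n, w + w') := by
      have h := SetLike.mul_mem_graded (hf w) (hg w')
      rwa [Prod.mk_add_mk] at h
    by_cases hlt : m + n < w + w'
    · exact memC_right _ _ _ hlt hmem
    · have hwm : w = m := by omega
      have hwn : w' = n := by omega
      subst hwm; subst hwn
      refine memC_left _ _ hmem ?_
      rw [hleib w w (f w) (hf w) (g w'), hdf, hdg]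
      simp
  -- (a') closed under d
  have goal3 : ∀ n : ℤ, ∀ a ∈ Csub n, d a ∈ Csub (n + 1) := by
    intro n a ha
    obtain ⟨f, hf, hge, hdn, rfl⟩ := extractC n a ha
    rw [Finsupp.sum, map_sum]
    apply Submodule.sum_mem
    intro w hw
    have h1 : n ≤ w := hge w (Finsupp.mem_support_iff.mp hw)
    rcases eq_or_lt_of_le h1 with h | h
    · rw [← h, hdn]
      exact Submodule.zero_mem _
    · have hm : d (f w) ∈ 𝒜 (n + 1, w) := hd n w _ (hf w)
      rcases eq_or_lt_of_le (by omega : n + 1 ≤ w) with h2 | h2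
      · rw [← h2] at hm ⊢
        exact memC_left _ _ hm (hdd _)
      · exact memC_right _ _ _ h2 hm
  -- (b) surjectivity on cohomology
  have goal4 : ∀ n : ℤ, ∀ a ∈ An n, d a = 0 →
      ∃ c ∈ Csub n, ∃ b ∈ An (n - 1), a = c + d b := by
    intro n a ha h0
    rw [hAn] at ha
    obtain ⟨f, hf, rfl⟩ := st15_extractA 𝒜 n ha
    have hcl : ∀ w, d (f w) = 0 := st15_uniq 𝒜 d hd n f hf h0
    have hex : ∀ w : ℤ, ∃ bw : A, w < n → bw ∈ 𝒜 (n - 1, w) ∧ d bw = f w := by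
      intro w
      by_cases hw : w < n
      · obtain ⟨bw, hb1, hb2⟩ := hpure n w (by omega) (f w) (hf w) (hcl w)
        exact ⟨bw, fun _ => ⟨hb1, hb2⟩⟩
      · exact ⟨0, fun h => absurd h hw⟩
    choose F hF using hex
    refine ⟨∑ w ∈ f.support.filter (fun w => n ≤ w), f w, ?_,
      ∑ w ∈ f.support.filter (fun w => ¬ n ≤ w), F w, ?_, ?_⟩
    · apply Submodule.sum_mem
      intro w hw
      rw [Finset.mem_filter] at hw
      rcases eq_or_lt_of_le hw.2 with h | h
      · have h' : w = n := h.symm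
        subst h'
        exact memC_left w _ (hf w) (hcl w)
      · exact memC_right _ _ _ h (hf w)
    · rw [hAn]
      apply Submodule.sum_mem
      intro w hw
      rw [Finset.mem_filter] at hw
      exact (le_iSup (fun w => 𝒜 (n - 1, w)) w) ((hF w (by omega)).1)
    · rw [Finsupp.sum, map_sum]
      have heq : ∑ w ∈ f.support.filter (fun w => ¬ n ≤ w), d (F w)
          = ∑ w ∈ f.support.filter (fun w => ¬ n ≤ w), f w := by
        refine Finset.sum_congr rfl fun w hw => ?_
        rw [Finset.mem_filter] at hw
        exact (hF w (by omega)).2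
      rw [heq]
      exact (Finset.sum_filter_add_sum_filter_not _ _ _).symm
  -- (b) injectivity on cohomology
  have goal5 : ∀ n : ℤ, ∀ c ∈ Csub n, d c = 0 → (∃ b ∈ An (n - 1), c = d b) →
      ∃ b' ∈ Csub (n - 1), c = d b' := by
    intro n c hc hdc hex
    obtain ⟨b, hb, hcb⟩ := hex
    rw [hAn] at hb
    obtain ⟨f, hf, rfl⟩ := st15_extractA 𝒜 (n - 1) hb
    have hdw : ∀ w, d (f w) ∈ 𝒜 (n, w) := by
      intro w
      have h := hd (n - 1) w (f w) (hf w)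
      rwa [show n - 1 + 1 = n by ring] at h
    have hcomp : ∀ w₀ : ℤ, ((DirectSum.decompose 𝒜 c (n, w₀) : 𝒜 (n, w₀)) : A)
        = if w₀ ∈ f.support then d (f w₀) else 0 := by
      intro w₀
      rw [hcb, Finsupp.sum, map_sum]
      exact st15_sumcomp 𝒜 n f.support _ hdw w₀
    obtain ⟨g, hg, hge, -, hceq⟩ := extractC n c hc
    have hcomp2 : ∀ w₀ : ℤ, ((DirectSum.decompose 𝒜 c (n, w₀) : 𝒜 (n, w₀)) : A) = g w₀ := by
      intro w₀
      rw [hceq]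
      exact st15_finsuppcomp 𝒜 n g hg w₀
    have hzero : ∀ w ∈ f.support, w < n → d (f w) = 0 := by
      intro w hw hwn
      have h1 := hcomp w
      rw [hcomp2 w, if_pos hw] at h1
      have h2 : g w = 0 := by
        by_contra h
        exact absurd (hge w h) (by omega)
      rw [← h1, h2]
    refine ⟨∑ w ∈ f.support.filter (fun w => n - 1 ≤ w), f w, ?_, ?_⟩
    · apply Submodule.sum_mem
      intro w hw
      rw [Finset.mem_filter] at hw
      rcases eq_or_lt_of_le hw.2 with h | h
      · have h' : w = n - 1 := h.symm
        subst h'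
        exact memC_left (n - 1) _ (hf (n - 1)) (hzero (n - 1) hw.1 (by omega))
      · exact memC_right _ _ _ h (hf w)
    · rw [map_sum]
      rw [hcb, Finsupp.sum, map_sum]
      exact (Finset.sum_subset (Finset.filter_subset _ _) (fun x hx hnx => by
        rw [Finset.mem_filter] at hnx
        push_neg at hnx
        exact hzero x hx (by have := hnx hx; omega))).symm
  refine ⟨⟨goal1, goal2⟩, goal3, goal4, goal5, ?_, ?_⟩
  -- (c) surjectivity on cohomology
  · intro n z hz hdz
    refine ⟨z, memC_left n z hz hdz, hdz, 0, ?_, ?_⟩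
    · rw [hAn]; exact Submodule.zero_mem _
    · rw [DirectSum.decompose_of_mem_same 𝒜 hz, sub_self, map_zero]
  -- (c) injectivity on cohomology
  · intro n c hc hdc hex
    obtain ⟨b, hb, hdb⟩ := hex
    obtain ⟨f, hf, hge, hdfn, rfl⟩ := extractC n c hc
    have hcl : ∀ w, d (f w) = 0 := st15_uniq 𝒜 d hd n f hf hdc
    have hfn : f n = d b := by
      rw [← st15_finsuppcomp 𝒜 n f hf n]
      exact hdb
    obtain ⟨b'', hb''C, hb''⟩ := goal5 n (f n) (memC_left n (f n) (hf n) hdfn) hdfn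
      ⟨b, hb, hfn⟩
    have hex2 : ∀ w : ℤ, ∃ e : A, n < w → e ∈ 𝒜 (n - 1, w) ∧ d e = f w := by
      intro w
      by_cases hw : n < w
      · obtain ⟨e, he1, he2⟩ := hpure n w (by omega) (f w) (hf w) (hcl w)
        exact ⟨e, fun _ => ⟨he1, he2⟩⟩
      · exact ⟨0, fun h => absurd h hw⟩
    choose E hE using hex2
    refine ⟨b'' + ∑ w ∈ f.support.filter (fun w => n < w), E w, ?_, ?_⟩
    · refine Submodule.add_mem _ hb''C (Submodule.sum_mem _ fun w hw => ?_)
      rw [Finset.mem_filter] at hw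
      exact memC_right (n - 1) w _ (by omega) ((hE w hw.2).1)
    · rw [map_add, map_sum]
      have heq : ∑ w ∈ f.support.filter (fun w => n < w), d (E w)
          = ∑ w ∈ f.support.filter (fun w => n < w), f w :=
        Finset.sum_congr rfl fun w hw => (hE w (Finset.mem_filter.mp hw).2).2
      rw [heq, ← hb'', Finsupp.sum]
      have hfilter : ∑ w ∈ f.support.filter (fun w => ¬ n < w), f w = f n := by
        by_cases hn : n ∈ f.support
        · have hset : f.support.filter (fun w => ¬ n < w) = {n} := by
            ext w
            simp only [Finset.mem_filter, Finset.mem_singleton]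
            constructor
            · rintro ⟨hw1, hw2⟩
              have := hge w (Finsupp.mem_support_iff.mp hw1)
              omega
            · rintro rfl
              exact ⟨hn, by omega⟩
          rw [hset, Finset.sum_singleton]
        · have h1 : f n = 0 := Finsupp.notMem_support_iff.mp hn
          have hset : f.support.filter (fun w => ¬ n < w) = ∅ := by
            ext w
            simp only [Finset.mem_filter, Finset.notMem_empty, iff_false, not_and, not_not]
            intro hw1
            have h2 := hge w (Finsupp.mem_support_iff.mp hw1)
            have h3 : w ≠ n := by
              rintro rfl
              exact (Finsupp.mem_support_iff.mp hw1) h1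
            omega
          rw [hset, Finset.sum_empty, h1]
      calc ∑ w ∈ f.support, f w
          = (∑ w ∈ f.support.filter (fun w => n < w), f w)
            + ∑ w ∈ f.support.filter (fun w => ¬ n < w), f w :=
            (Finset.sum_filter_add_sum_filter_not _ _ _).symm
        _ = f n + ∑ w ∈ f.support.filter (fun w => n < w), f w := by
            rw [hfilter, add_comm]
end
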